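/- Let h : ℝᵐ → ℝ be convex and globally Lipschitz with constant L, and F : ℝⁿ → ℝᵐ continuously differentiable. Define φ(y,x) = h(F(x) + F'(x)(y − x)). Then for any sequences x_k → x and y_k → x there exist ε_k → 0⁺ such that h(F(y_k)) ≤ φ(y_k, x_k) + ε_k‖y_k − x_k‖; i.e., φ is a strict first-order model of f = h ∘ F in the sense of axiom (M̃₂). -/

import Mathlib

open Filter

/-- The natural model `φ(y,x) = h(F(x) + F'(x)(y − x))` of the composite
function `f = h ∘ F`, with `h` convex and `L`-Lipschitz and `F` of class `C¹`,
is strict in the sense of axiom (M̃₂). -/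
theorem natural_model_strict {n m : ℕ}
    (h : EuclideanSpace ℝ (Fin m) → ℝ) (L : NNReal)
    (hconv : ConvexOn ℝ Set.univ h) (hlip : LipschitzWith L h)
    (F : EuclideanSpace ℝ (Fin n) → EuclideanSpace ℝ (Fin m))
    (hF : ContDiff ℝ 1 F)
    (φ : EuclideanSpace ℝ (Fin n) → EuclideanSpace ℝ (Fin n) → ℝ)
    (hφ : ∀ y x, φ y x = h (F x + fderiv ℝ F x (y - x))) :
    ∀ (x : EuclideanSpace ℝ (Fin n)) (xk yk : ℕ → EuclideanSpace ℝ (Fin n)),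
      Tendsto xk atTop (nhds x) → Tendsto yk atTop (nhds x) →
      ∃ ε : ℕ → ℝ, Tendsto ε atTop (nhds 0) ∧ (∀ k, 0 ≤ ε k) ∧
        ∀ k, h (F (yk k)) ≤ φ (yk k) (xk k) + ε k * ‖yk k - xk k‖ := by
  classical
  intro x xk yk hxk hyk
  set f' := fderiv ℝ F with hf'
  have hdiff : Differentiable ℝ F := hF.differentiable one_ne_zero
  set ε : ℕ → ℝ := fun k => if yk k = xk k then 0 else
    (L : ℝ) * ‖F (yk k) - F (xk k) - f' (xk k) (yk k - xk k)‖ / ‖yk k - xk k‖ with hε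
  have hεnn : ∀ k, 0 ≤ ε k := by
    intro k
    simp only [hε]
    split
    · exact le_refl 0
    · positivity
  refine ⟨ε, ?_, hεnn, ?_⟩
  · rw [Metric.tendsto_atTop]
    intro δ hδ
    have hLpos : (0:ℝ) < (L:ℝ) + 1 := by positivity
    have hδ' : 0 < δ / ((L:ℝ) + 1) / 2 := by positivity
    have hc : Continuous f' := hF.continuous_fderiv one_ne_zero
    have hev : ∀ᶠ z in nhds x, dist (f' z) (f' x) < δ / ((L:ℝ) + 1) / 2 :=
      Metric.tendsto_nhds.mp (hc.tendsto x) _ hδ'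
    obtain ⟨r, hr0, hrball⟩ := Metric.eventually_nhds_iff_ball.mp hev
    have hx' : ∀ᶠ k in atTop, xk k ∈ Metric.ball x r :=
      hxk (Metric.ball_mem_nhds x hr0)
    have hy' : ∀ᶠ k in atTop, yk k ∈ Metric.ball x r :=
      hyk (Metric.ball_mem_nhds x hr0)
    rw [Filter.eventually_atTop] at hx' hy'
    obtain ⟨N1, hN1⟩ := hx'
    obtain ⟨N2, hN2⟩ := hy'
    refine ⟨max N1 N2, fun k hk => ?_⟩
    have hxb := hN1 k (le_trans (le_max_left _ _) hk)
    have hyb := hN2 k (le_trans (le_max_right _ _) hk)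
    have bound : ∀ z ∈ Metric.ball x r, ‖f' z - f' (xk k)‖ ≤ δ / ((L:ℝ) + 1) := by
      intro z hz
      have h1 : ‖f' z - f' x‖ < δ / ((L:ℝ) + 1) / 2 := by
        rw [← dist_eq_norm]; exact hrball z hz
      have h2 : ‖f' x - f' (xk k)‖ < δ / ((L:ℝ) + 1) / 2 := by
        rw [← dist_eq_norm, dist_comm]; exact hrball _ hxb
      calc ‖f' z - f' (xk k)‖ ≤ ‖f' z - f' x‖ + ‖f' x - f' (xk k)‖ := norm_sub_le_norm_sub_add_norm_sub _ _ _
        _ ≤ δ / ((L:ℝ) + 1) / 2 + δ / ((L:ℝ) + 1) / 2 := by linarith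
        _ = δ / ((L:ℝ) + 1) := by ring
    have key : ‖F (yk k) - F (xk k) - f' (xk k) (yk k - xk k)‖ ≤
        (δ / ((L:ℝ) + 1)) * ‖yk k - xk k‖ :=
      (convex_ball x r).norm_image_sub_le_of_norm_fderiv_le'
        (fun z _ => hdiff z) bound hxb hyb
    have hεle : ε k ≤ (L:ℝ) * (δ / ((L:ℝ) + 1)) := by
      simp only [hε]
      split_ifs with hcase
      · positivity
      · have hne : ‖yk k - xk k‖ ≠ 0 := by
          simpa [sub_eq_zero] using hcase
        have hpos : 0 < ‖yk k - xk k‖ := lt_of_le_of_ne (norm_nonneg _) (Ne.symm hne)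
        rw [div_le_iff₀ hpos]
        calc (L:ℝ) * ‖F (yk k) - F (xk k) - f' (xk k) (yk k - xk k)‖
            ≤ (L:ℝ) * ((δ / ((L:ℝ) + 1)) * ‖yk k - xk k‖) := by
              exact mul_le_mul_of_nonneg_left key L.coe_nonneg
          _ = (L:ℝ) * (δ / ((L:ℝ) + 1)) * ‖yk k - xk k‖ := by ring
    have hlt : (L:ℝ) * (δ / ((L:ℝ) + 1)) < δ := by
      rw [mul_div_assoc']
      rw [div_lt_iff₀ hLpos]
      nlinarith [L.coe_nonneg]
    rw [Real.dist_eq, sub_zero, abs_of_nonneg (hεnn k)]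
    exact lt_of_le_of_lt hεle hlt
  · intro k
    rw [hφ]
    by_cases hyx : yk k = xk k
    · simp [hε, hyx]
    · have hne : ‖yk k - xk k‖ ≠ 0 := by simpa [sub_eq_zero] using hyx
      have hd := hlip.dist_le_mul (F (yk k)) (F (xk k) + f' (xk k) (yk k - xk k))
      rw [Real.dist_eq] at hd
      have hd' : h (F (yk k)) - h (F (xk k) + f' (xk k) (yk k - xk k)) ≤
          (L : ℝ) * ‖F (yk k) - F (xk k) - f' (xk k) (yk k - xk k)‖ := by
        calc h (F (yk k)) - h (F (xk k) + f' (xk k) (yk k - xk k))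
            ≤ |h (F (yk k)) - h (F (xk k) + f' (xk k) (yk k - xk k))| := le_abs_self _
          _ ≤ (L : ℝ) * dist (F (yk k)) (F (xk k) + f' (xk k) (yk k - xk k)) := hd
          _ = (L : ℝ) * ‖F (yk k) - F (xk k) - f' (xk k) (yk k - xk k)‖ := by
              rw [dist_eq_norm]; congr 1; abel_nf
    -- finish
      have hεval : ε k * ‖yk k - xk k‖ =
          (L : ℝ) * ‖F (yk k) - F (xk k) - f' (xk k) (yk k - xk k)‖ := by
        simp only [hε, if_neg hyx]
        field_simp
      linarith [hd', hεval]
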